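/- Let Ω be a finite set and let P and Q be partitions of Ω such that Q refines P. Then there exists a finite chain of partitions P = P₀, P₁, …, P_n = Q such that each P_{i+1} refines P_i and each step P_i → P_{i+1} is atomic: exactly one block of P_i is subdivided into two or more blocks, and all other blocks of P_i remain blocks of P_{i+1}. -/
import Mathlib


/-- A partition of a finite set: nonempty, pairwise disjoint blocks covering `Ω`. -/
def IsPartition {Ω : Type*} (P : Finset (Set Ω)) : Prop :=
  (∀ A ∈ P, A.Nonempty) ∧
  (∀ A ∈ P, ∀ B ∈ P, A ≠ B → Disjoint A B) ∧
  ⋃₀ (P : Set (Set Ω)) = Set.univ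

/-- `Q` refines `P`: every block of `Q` is contained in a block of `P`. -/
def Refines {Ω : Type*} (Q P : Finset (Set Ω)) : Prop :=
  ∀ B ∈ Q, ∃ A ∈ P, B ⊆ A

open Classical in
/-- An atomic refinement step: `Q` refines `P`, exactly one block `A` of `P` is
subdivided into at least two blocks of `Q`, and every other block of `P`
remains a block of `Q`. -/
def AtomicStep {Ω : Type*} (P Q : Finset (Set Ω)) : Prop :=
  Refines Q P ∧
  ∃ A ∈ P, A ∉ Q ∧ (∀ B ∈ P, B ≠ A → B ∈ Q) ∧
    2 ≤ (Q.filter (fun B => B ⊆ A)).card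

open Classical

lemma block_eq_sUnion {Ω : Type*} {P Q : Finset (Set Ω)}
    (hP : IsPartition P) (hQ : IsPartition Q) (href : Refines Q P)
    {A : Set Ω} (hA : A ∈ P) :
    A = ⋃₀ ((Q.filter (fun B => B ⊆ A)) : Set (Set Ω)) := by
  apply Set.Subset.antisymm
  · intro x hx
    have hxQ : x ∈ ⋃₀ (Q : Set (Set Ω)) := hQ.2.2 ▸ Set.mem_univ x
    obtain ⟨B, hB, hxB⟩ := hxQ
    obtain ⟨A', hA', hBA'⟩ := href B hB
    have hAA' : A = A' := by
      by_contra h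
      exact Set.disjoint_left.mp (hP.2.1 A hA A' hA' h) hx (hBA' hxB)
    exact ⟨B, Finset.mem_coe.mpr (Finset.mem_filter.mpr ⟨hB, hAA' ▸ hBA'⟩), hxB⟩
  · intro x hx
    obtain ⟨B, hB, hxB⟩ := hx
    exact (Finset.mem_filter.mp hB).2 hxB

lemma two_le_card_sub {Ω : Type*} {P Q : Finset (Set Ω)}
    (hP : IsPartition P) (hQ : IsPartition Q) (href : Refines Q P)
    {A : Set Ω} (hA : A ∈ P) (hAQ : A ∉ Q) :
    2 ≤ (Q.filter (fun B => B ⊆ A)).card := by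
  set F := Q.filter (fun B => B ⊆ A) with hF
  have hAU : A = ⋃₀ (F : Set (Set Ω)) := block_eq_sUnion hP hQ href hA
  have hne : F.Nonempty := by
    obtain ⟨x, hx⟩ := hP.1 A hA
    rw [hAU] at hx
    obtain ⟨B, hB, -⟩ := hx
    exact ⟨B, hB⟩
  by_contra h
  push_neg at h
  interval_cases hc : F.card
  · exact hne.ne_empty (Finset.card_eq_zero.mp hc)
  · obtain ⟨B, hB⟩ := Finset.card_eq_one.mp hc
    rw [hB] at hAU
    simp only [Finset.coe_singleton, Set.sUnion_singleton] at hAU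
    have : B ∈ Q := by
      have := hB ▸ (Finset.mem_singleton_self B)
      exact (Finset.mem_filter.mp this).1
    exact hAQ (hAU ▸ this)

lemma part_eq_of_subset {Ω : Type*} {P Q : Finset (Set Ω)}
    (hP : IsPartition P) (hQ : IsPartition Q) (hPQ : P ⊆ Q) : P = Q := by
  apply Finset.Subset.antisymm hPQ
  intro B hB
  obtain ⟨x, hx⟩ := hQ.1 B hB
  have hxP : x ∈ ⋃₀ (P : Set (Set Ω)) := hP.2.2 ▸ Set.mem_univ x
  obtain ⟨A, hA, hxA⟩ := hxP
  have : B = A := by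
    by_contra h
    exact Set.disjoint_left.mp (hQ.2.1 B hB A (hPQ hA) h) hx hxA
  exact this ▸ hA

lemma aux_chain {Ω : Type*} :
    ∀ m : ℕ, ∀ P Q : Finset (Set Ω), (P \ Q).card = m →
    IsPartition P → IsPartition Q → Refines Q P →
    ∃ (n : ℕ) (c : Fin (n + 1) → Finset (Set Ω)),
      c 0 = P ∧ c (Fin.last n) = Q ∧
      (∀ i, IsPartition (c i)) ∧
      (∀ i : Fin n, AtomicStep (c i.castSucc) (c i.succ)) := by
  intro m
  induction m using Nat.strong_induction_on with
  | _ m ih =>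
    intro P Q hm hP hQ href
    by_cases hsub : P ⊆ Q
    · -- base case: P = Q
      refine ⟨0, fun _ => P, rfl, ?_, fun _ => hP, fun i => i.elim0⟩
      exact (part_eq_of_subset hP hQ hsub)
    · -- find A ∈ P, A ∉ Q
      obtain ⟨A, hA, hAQ⟩ := Finset.not_subset.mp hsub
      set F := Q.filter (fun B => B ⊆ A) with hFdef
      set P' := (P.erase A) ∪ F with hP'def
      have hAU : A = ⋃₀ (F : Set (Set Ω)) := block_eq_sUnion hP hQ href hA
      have hFQ : F ⊆ Q := Finset.filter_subset _ _
      have hFcard : 2 ≤ F.card := two_le_card_sub hP hQ href hA hAQ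
      -- P' is a partition
      have hP' : IsPartition P' := by
        refine ⟨?_, ?_, ?_⟩
        · intro B hB
          rcases Finset.mem_union.mp hB with h | h
          · exact hP.1 B (Finset.mem_of_mem_erase h)
          · exact hQ.1 B (hFQ h)
        · intro B hB C hC hne
          rcases Finset.mem_union.mp hB with hB' | hB' <;>
            rcases Finset.mem_union.mp hC with hC' | hC'
          · exact hP.2.1 B (Finset.mem_of_mem_erase hB') C (Finset.mem_of_mem_erase hC') hne
          · have : Disjoint B A :=
              hP.2.1 B (Finset.mem_of_mem_erase hB') A hA (Finset.ne_of_mem_erase hB')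
            exact this.mono_right (Finset.mem_filter.mp hC').2
          · have : Disjoint A C :=
              hP.2.1 A hA C (Finset.mem_of_mem_erase hC') (Finset.ne_of_mem_erase hC').symm
            exact this.mono_left (Finset.mem_filter.mp hB').2
          · exact hQ.2.1 B (hFQ hB') C (hFQ hC') hne
        · apply Set.eq_univ_of_univ_subset
          rw [← hP.2.2]
          intro x hx
          obtain ⟨B, hB, hxB⟩ := hx
          by_cases hBA : B = A
          · subst hBA
            rw [hAU] at hxB
            obtain ⟨C, hC, hxC⟩ := hxB
            exact ⟨C, Finset.mem_coe.mpr (Finset.mem_union_right _ hC), hxC⟩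
          · exact ⟨B, Finset.mem_coe.mpr
              (Finset.mem_union_left _ (Finset.mem_erase.mpr ⟨hBA, hB⟩)), hxB⟩
      -- Q refines P'
      have href' : Refines Q P' := by
        intro B hB
        obtain ⟨A', hA', hBA'⟩ := href B hB
        by_cases h : A' = A
        · exact ⟨B, Finset.mem_union_right _
            (Finset.mem_filter.mpr ⟨hB, h ▸ hBA'⟩), subset_rfl⟩
        · exact ⟨A', Finset.mem_union_left _ (Finset.mem_erase.mpr ⟨h, hA'⟩), hBA'⟩
      -- AtomicStep P P'
      have hstep : AtomicStep P P' := by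
        refine ⟨?_, A, hA, ?_, ?_, ?_⟩
        · intro B hB
          rcases Finset.mem_union.mp hB with h | h
          · exact ⟨B, Finset.mem_of_mem_erase h, subset_rfl⟩
          · exact ⟨A, hA, (Finset.mem_filter.mp h).2⟩
        · intro h
          rcases Finset.mem_union.mp h with h' | h'
          · exact (Finset.mem_erase.mp h').1 rfl
          · exact hAQ (hFQ h')
        · intro B hB hne
          exact Finset.mem_union_left _ (Finset.mem_erase.mpr ⟨hne, hB⟩)
        · calc 2 ≤ F.card := hFcard
            _ ≤ (P'.filter (fun B => B ⊆ A)).card := by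
              apply Finset.card_le_card
              intro B hB
              exact Finset.mem_filter.mpr
                ⟨Finset.mem_union_right _ hB, (Finset.mem_filter.mp hB).2⟩
      -- measure decreases
      have hmeas : (P' \ Q).card < m := by
        have h1 : P' \ Q ⊆ (P \ Q).erase A := by
          intro B hB
          obtain ⟨hB1, hB2⟩ := Finset.mem_sdiff.mp hB
          rcases Finset.mem_union.mp hB1 with h | h
          · exact Finset.mem_erase.mpr ⟨(Finset.mem_erase.mp h).1,
              Finset.mem_sdiff.mpr ⟨Finset.mem_of_mem_erase h, hB2⟩⟩
          · exact absurd (hFQ h) hB2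
        have hAin : A ∈ P \ Q := Finset.mem_sdiff.mpr ⟨hA, hAQ⟩
        calc (P' \ Q).card ≤ ((P \ Q).erase A).card := Finset.card_le_card h1
          _ < (P \ Q).card := Finset.card_erase_lt_of_mem hAin
          _ = m := hm
      obtain ⟨n, c', hc0, hclast, hcpart, hcstep⟩ :=
        ih _ hmeas P' Q rfl hP' hQ href'
      refine ⟨n + 1, Fin.cases P c', Fin.cases_zero .., ?_, ?_, ?_⟩
      · simp only [← Fin.succ_last, Fin.cases_succ]
        exact hclast
      · intro i
        induction i using Fin.cases with
        | zero => simpa using hP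
        | succ j => simp only [Fin.cases_succ]; exact hcpart j
      · intro i
        induction i using Fin.cases with
        | zero =>
          simp only [Fin.castSucc_zero, Fin.cases_succ, Fin.cases_zero, hc0]
          exact hstep
        | succ j =>
          simp only [← Fin.succ_castSucc, Fin.cases_succ]
          exact hcstep j

/-- every refinement of partitions of a finite set decomposes into a
finite chain of atomic refinement steps. -/
theorem refinement_decomposes_into_atomic_steps
    {Ω : Type*} [Fintype Ω]
    (P Q : Finset (Set Ω)) (hP : IsPartition P) (hQ : IsPartition Q)
    (href : Refines Q P) :
    ∃ (n : ℕ) (c : Fin (n + 1) → Finset (Set Ω)),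
      c 0 = P ∧ c (Fin.last n) = Q ∧
      (∀ i, IsPartition (c i)) ∧
      (∀ i : Fin n, AtomicStep (c i.castSucc) (c i.succ)) := by
  exact aux_chain _ P Q rfl hP hQ href
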